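/- arXiv:1110.0108 — 2 statements merged into one kernel-verified Lean document; each statement's English description precedes it below -/
import Mathlib

section
/- For every real s_L, every natural number k, and every i ∈ {0, 1, 2}, there exists a constant C = C(s_L, k, i) such that |s|^k · |Ai^{(i)}(s)| ≤ C e^{−s} for all s ≥ s_L, where Ai^{(0)} = Ai, Ai^{(1)} = Ai', Ai^{(2)} = Ai''. -/
open Real Filter MeasureTheory

/-- Physicists' Hermite polynomial `H_n(x) = (-1)^n e^{x²} (d^n/dx^n) e^{-x²}`. -/
noncomputable def physHermite (n : ℕ) (x : ℝ) : ℝ :=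
  (-1 : ℝ) ^ n * Real.exp (x ^ 2) * iteratedDeriv n (fun t : ℝ => Real.exp (-t ^ 2)) x

/-- Normalizing constant `h_n = √π 2^n n!`. -/
noncomputable def hNorm (n : ℕ) : ℝ := Real.sqrt Real.pi * 2 ^ n * (n.factorial : ℝ)

/-- Oscillator wave function `φ_n(x) = h_n^{-1/2} e^{-x²/2} H_n(x)`. -/
noncomputable def osc (n : ℕ) (x : ℝ) : ℝ :=
  hNorm n ^ (-(1 : ℝ) / 2) * Real.exp (-x ^ 2 / 2) * physHermite n x

/-- Airy function `Ai(x) = π⁻¹ lim_{R→∞} ∫₀^R cos(t³/3 + xt) dt`. -/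
noncomputable def Ai (x : ℝ) : ℝ :=
  Real.pi⁻¹ *
    limUnder Filter.atTop (fun R : ℝ => ∫ t in (0 : ℝ)..R, Real.cos (t ^ 3 / 3 + x * t))

/-- Scaling constant `τ_N = 2^{-1/2} N^{-1/6}`. -/
noncomputable def tauN (N : ℕ) : ℝ := (2 : ℝ) ^ (-(1 : ℝ) / 2) * (N : ℝ) ^ (-(1 : ℝ) / 6)

/-- `Δ_N = (√(2N+1) - √(2N-1))/τ_N`. -/
noncomputable def DeltaN (N : ℕ) : ℝ :=
  (Real.sqrt (2 * N + 1) - Real.sqrt (2 * N - 1)) / tauN N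

open Set Topology

/-! ### Auxiliary development for the Airy function -/

noncomputable def fA (x : ℝ) (z : ℂ) : ℂ := Complex.exp (Complex.I * (z^3/3 + x*z))

lemma fA_vert (x y : ℝ) : fA x ((y:ℂ)*Complex.I) = ((Real.exp (y^3/3 - x*y) : ℝ) : ℂ) := by
  have h : Complex.I * ((((y:ℂ)*Complex.I))^3/3 + (x:ℂ)*((y:ℂ)*Complex.I))
      = ((y^3/3 - x*y : ℝ) : ℂ) := by
    simp [Complex.ext_iff, pow_succ, Complex.mul_re, Complex.mul_im, Complex.add_re,
      Complex.add_im, Complex.div_re, Complex.div_im, Complex.normSq]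
    ring
  rw [fA, h, Complex.ofReal_exp]

lemma fA_real (x t : ℝ) : fA x t
    = ((Real.cos (t^3/3 + x*t) : ℝ):ℂ) + ((Real.sin (t^3/3 + x*t) : ℝ):ℂ) * Complex.I := by
  rw [fA]
  have : Complex.I * ((t:ℂ)^3/3 + x*t) = ((t^3/3 + x*t : ℝ):ℂ) * Complex.I := by push_cast; ring
  rw [this, Complex.exp_mul_I, Complex.ofReal_cos, Complex.ofReal_sin]

lemma fA_norm (x t h : ℝ) : ‖fA x ((t:ℂ) + (h:ℂ)*Complex.I)‖
    = Real.exp ((h^3 - 3*t^2*h)/3 - x*h) := by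
  rw [fA, Complex.norm_exp]
  congr 1
  simp [Complex.ext_iff, pow_succ, Complex.mul_re, Complex.mul_im, Complex.add_re, Complex.add_im,
    Complex.div_re, Complex.div_im, Complex.normSq]
  ring

lemma fA_diff (x : ℝ) : Differentiable ℂ (fA x) := by
  apply Differentiable.cexp; fun_prop

/-- integrand for the shifted representation, with `j` derivatives in `x` taken. -/
noncomputable def fAj (h : ℝ) (j : ℕ) (x : ℝ) (t : ℝ) : ℂ :=
  (Complex.I*((t:ℂ)+(h:ℂ)*Complex.I))^j * fA x ((t:ℂ)+(h:ℂ)*Complex.I)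

noncomputable def AiD (h : ℝ) (j : ℕ) (x : ℝ) : ℂ := ∫ t in Ioi (0:ℝ), fAj h j x t

lemma fAj_cont (h : ℝ) (j : ℕ) (x : ℝ) : Continuous (fAj h j x) := by
  unfold fAj fA
  apply Continuous.mul
  · fun_prop
  · apply Continuous.cexp; fun_prop

lemma fAj_norm_le (h : ℝ) (j : ℕ) (hj : j ≤ 2) (x t : ℝ) :
    ‖fAj h j x t‖ ≤ (1+h^2+t^2) * (Real.exp (h^3/3 - x*h) * Real.exp (-(h*t^2))) := by
  have habs : ‖Complex.I*((t:ℂ)+(h:ℂ)*Complex.I)‖^2 = t^2 + h^2 := by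
    rw [norm_mul, Complex.norm_I, one_mul, Complex.sq_norm]
    simp [Complex.normSq_apply]
    ring
  have hn : ‖fAj h j x t‖ = ‖Complex.I*((t:ℂ)+(h:ℂ)*Complex.I)‖^j
      * (Real.exp (h^3/3 - x*h) * Real.exp (-(h*t^2))) := by
    rw [fAj, norm_mul, norm_pow, fA_norm, ← Real.exp_add]
    congr 2
    ring
  rw [hn]
  have hpos : (0:ℝ) ≤ Real.exp (h^3/3 - x*h) * Real.exp (-(h*t^2)) := by positivity
  apply mul_le_mul_of_nonneg_right _ hpos
  set a := ‖Complex.I*((t:ℂ)+(h:ℂ)*Complex.I)‖ with ha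
  have ha0 : 0 ≤ a := norm_nonneg _
  interval_cases j
  · simpa using by nlinarith [sq_nonneg t, sq_nonneg h]
  · nlinarith [sq_nonneg (a - 1), sq_nonneg t, sq_nonneg h]
  · rw [habs]; nlinarith []

lemma bound_integrable (h : ℝ) (hh : 0 < h) (c : ℝ) :
    IntegrableOn (fun t : ℝ => (1+h^2+t^2) * (c * Real.exp (-(h*t^2)))) (Ioi 0) := by
  have h1 : IntegrableOn (fun t : ℝ => Real.exp (-(h*t^2))) (Ioi 0) := by
    simpa [neg_mul] using (integrable_exp_neg_mul_sq hh).integrableOn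
  have h2 : IntegrableOn (fun t : ℝ => t^2 * Real.exp (-(h*t^2))) (Ioi 0) := by
    have h2' := integrableOn_rpow_mul_exp_neg_mul_sq hh (s := 2) (by norm_num)
    apply h2'.congr_fun _ measurableSet_Ioi
    intro t ht
    have : t ^ (2:ℝ) = t ^ (2:ℕ) := by
      rw [show (2:ℝ) = ((2:ℕ):ℝ) by norm_num, Real.rpow_natCast]
    simp only [this, neg_mul]
  have : IntegrableOn (fun t : ℝ => (1+h^2) * Real.exp (-(h*t^2)) + t^2 * Real.exp (-(h*t^2)))
      (Ioi 0) := (h1.const_mul _).add h2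
  apply (this.const_mul c).congr
  filter_upwards with t
  ring

lemma fAj_integrableOn (h : ℝ) (hh : 0 < h) (j : ℕ) (hj : j ≤ 2) (x : ℝ) :
    IntegrableOn (fAj h j x) (Ioi 0) := by
  apply Integrable.mono' (bound_integrable h hh (Real.exp (h^3/3 - x*h)))
  · exact (fAj_cont h j x).aestronglyMeasurable.restrict
  · filter_upwards with t
    exact fAj_norm_le h j hj x t

/-- The contour (rectangle) identity. -/
lemma contour (x h R : ℝ) (hh : 0 ≤ h) :
    (∫ t in (0:ℝ)..R, fA x t)
      = (∫ t in (0:ℝ)..R, fA x ((t:ℂ) + (h:ℂ)*Complex.I))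
        + Complex.I • (∫ y in (0:ℝ)..h, fA x ((y:ℂ)*Complex.I))
        - Complex.I • ∫ y in (0:ℝ)..h, fA x ((R:ℂ) + (y:ℂ)*Complex.I) := by
  have key := Complex.integral_boundary_rect_eq_zero_of_differentiableOn (fA x)
    0 ((R:ℂ) + (h:ℂ)*Complex.I) ((fA_diff x).differentiableOn)
  simp only [Complex.zero_re, Complex.zero_im, Complex.add_re, Complex.add_im,
    Complex.ofReal_re, Complex.ofReal_im, Complex.mul_re, Complex.mul_im, Complex.I_re,
    Complex.I_im, mul_zero, mul_one, zero_mul, sub_zero, add_zero, zero_add,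
    Complex.ofReal_zero] at key
  linear_combination key

lemma tendsto_side (x h : ℝ) (hh : 0 < h) :
    Tendsto (fun R : ℝ => ∫ y in (0:ℝ)..h, fA x ((R:ℂ) + (y:ℂ)*Complex.I)) atTop (𝓝 0) := by
  have hrw : ∀ R : ℝ, (∫ y in (0:ℝ)..h, fA x ((R:ℂ) + (y:ℂ)*Complex.I))
      = ∫ y in Ioc (0:ℝ) h, fA x ((R:ℂ) + (y:ℂ)*Complex.I) := fun R =>
    intervalIntegral.integral_of_le hh.le
  simp_rw [hrw]
  have hexp : ∀ y : ℝ, 0 < y → Tendsto (fun R : ℝ => (y^3 - 3*R^2*y)/3 - x*y) atTop atBot := by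
    intro y hy
    have h1 : Tendsto (fun R : ℝ => R^2 * y) atTop atTop :=
      (tendsto_pow_atTop two_ne_zero).atTop_mul_const hy
    have h2 : Tendsto (fun R : ℝ => -(R^2*y)) atTop atBot := tendsto_neg_atTop_atBot.comp h1
    have h3 := tendsto_atBot_add_const_left atTop (y^3/3 - x*y) h2
    exact h3.congr (fun R => by ring)
  have hmain : Tendsto (fun R : ℝ => ∫ y in Ioc (0:ℝ) h, fA x ((R:ℂ) + (y:ℂ)*Complex.I)) atTop
      (𝓝 (∫ y in Ioc (0:ℝ) h, (0:ℂ))) := by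
    apply tendsto_integral_filter_of_dominated_convergence
      (bound := fun _ => Real.exp (h^3/3 + |x| * h))
    · filter_upwards with R
      apply Continuous.aestronglyMeasurable ?_ |>.restrict
      unfold fA
      apply Continuous.cexp; fun_prop
    · filter_upwards with R
      filter_upwards [ae_restrict_mem measurableSet_Ioc] with y hy
      rw [fA_norm x R y]
      apply Real.exp_le_exp.2
      have hy1 : 0 < y := hy.1
      have hy2 : y ≤ h := hy.2
      have hcube : y^3 ≤ h^3 := pow_le_pow_left₀ hy1.le hy2 3
      have habs1 : -(x*y) ≤ |x| * h := by
        rcases le_or_gt 0 x with hx | hx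
        · nlinarith [abs_nonneg x, le_abs_self x]
        · nlinarith [neg_abs_le x]
      nlinarith [mul_nonneg (sq_nonneg R) hy1.le]
    · exact integrableOn_const measure_Ioc_lt_top.ne
    · filter_upwards [ae_restrict_mem measurableSet_Ioc] with y hy
      rw [tendsto_zero_iff_norm_tendsto_zero]
      have hfe : (fun R : ℝ => ‖fA x ((R:ℂ) + (y:ℂ)*Complex.I)‖)
          = fun R => Real.exp ((y^3 - 3*R^2*y)/3 - x*y) := funext fun R => fA_norm x R y
      rw [hfe]
      exact Real.tendsto_exp_atBot.comp (hexp y hy.1)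
  simpa using hmain

lemma tendsto_horiz (x h : ℝ) (hh : 0 < h) :
    Tendsto (fun R : ℝ => ∫ t in (0:ℝ)..R, fA x ((t:ℂ) + (h:ℂ)*Complex.I)) atTop
      (𝓝 (AiD h 0 x)) := by
  have h0 : AiD h 0 x = ∫ t in Ioi (0:ℝ), fA x ((t:ℂ) + (h:ℂ)*Complex.I) := by
    unfold AiD fAj
    simp
  rw [h0]
  have hint : IntegrableOn (fun t : ℝ => fA x ((t:ℂ) + (h:ℂ)*Complex.I)) (Ioi 0) := by
    have h4 := fAj_integrableOn h hh 0 (by norm_num) x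
    unfold fAj at h4
    simpa using h4
  exact intervalIntegral_tendsto_integral_Ioi 0 hint tendsto_id

lemma Ai_eq (h : ℝ) (hh : 0 < h) (x : ℝ) : Ai x = Real.pi⁻¹ * (AiD h 0 x).re := by
  set V : ℂ := ∫ y in (0:ℝ)..h, fA x ((y:ℂ)*Complex.I) with hVdef
  have hV : V = ((∫ y in (0:ℝ)..h, Real.exp (y^3/3 - x*y) : ℝ) : ℂ) := by
    rw [hVdef, ← intervalIntegral.integral_ofReal]
    exact intervalIntegral.integral_congr fun y _ => fA_vert x y
  have hlim : Tendsto (fun R : ℝ => ∫ t in (0:ℝ)..R, fA x t) atTop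
      (𝓝 (AiD h 0 x + Complex.I • V)) := by
    have hstep := ((tendsto_horiz x h hh).add (tendsto_const_nhds (x := Complex.I • V))).sub
      ((tendsto_side x h hh).const_smul Complex.I)
    simp only [smul_zero, sub_zero] at hstep
    exact hstep.congr fun R => (contour x h R hh.le).symm
  have hre : ∀ R : ℝ, (∫ t in (0:ℝ)..R, Real.cos (t^3/3 + x*t)) = (∫ t in (0:ℝ)..R, fA x t).re := by
    intro R
    have hc : IntervalIntegrable (fun t : ℝ => ((Real.cos (t^3/3+x*t) : ℝ):ℂ)) volume 0 R := by
      apply Continuous.intervalIntegrable; fun_prop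
    have hs : IntervalIntegrable (fun t : ℝ => ((Real.sin (t^3/3+x*t) : ℝ):ℂ) * Complex.I)
        volume 0 R := by
      apply Continuous.intervalIntegrable; fun_prop
    have hsplit : (∫ t in (0:ℝ)..R, fA x t)
        = (∫ t in (0:ℝ)..R, ((Real.cos (t^3/3+x*t):ℝ):ℂ))
          + ∫ t in (0:ℝ)..R, ((Real.sin (t^3/3+x*t):ℝ):ℂ) * Complex.I := by
      rw [← intervalIntegral.integral_add hc hs]
      exact intervalIntegral.integral_congr fun t _ => fA_real x t
    rw [hsplit, intervalIntegral.integral_mul_const, intervalIntegral.integral_ofReal,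
      intervalIntegral.integral_ofReal]
    simp
  have hre0 : (AiD h 0 x + Complex.I • V).re = (AiD h 0 x).re := by
    rw [hV]
    simp [Complex.add_re, smul_eq_mul, Complex.mul_re]
  have hlim2 : Tendsto (fun R : ℝ => ∫ t in (0:ℝ)..R, Real.cos (t^3/3 + x*t)) atTop
      (𝓝 ((AiD h 0 x).re)) := by
    have hcomp := (Complex.continuous_re.tendsto _).comp hlim
    rw [hre0] at hcomp
    exact hcomp.congr fun R => (hre R).symm
  rw [Ai]
  congr 1
  exact hlim2.limUnder_eq

lemma hasDerivAt_fA_param (x : ℝ) (z : ℂ) :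
    HasDerivAt (fun x : ℝ => fA x z) (Complex.I * z * fA x z) x := by
  have hrw : ∀ y : ℝ, fA y z = Complex.exp (Complex.I * z^3/3 + (y:ℂ) * (Complex.I * z)) := by
    intro y; rw [fA]; congr 1; ring
  simp_rw [hrw]
  have h1 : HasDerivAt (fun w : ℂ => Complex.I*z^3/3 + w*(Complex.I*z)) (Complex.I*z)
      ((x:ℝ):ℂ) := by
    simpa using ((hasDerivAt_id ((x:ℝ):ℂ)).mul_const (Complex.I*z)).const_add
      (Complex.I*z^3/3)
  have hg := h1.cexp
  have := hg.comp_ofReal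
  simpa [mul_comm] using this

lemma hasDerivAt_fAj (h : ℝ) (j : ℕ) (x : ℝ) (t : ℝ) :
    HasDerivAt (fun x => fAj h j x t) (fAj h (j+1) x t) x := by
  have hd := (hasDerivAt_fA_param x ((t:ℂ)+(h:ℂ)*Complex.I)).const_mul
    ((Complex.I*((t:ℂ)+(h:ℂ)*Complex.I))^j)
  unfold fAj
  convert hd using 1
  · rfl
  ring

lemma hasDerivAt_AiD (h : ℝ) (hh : 0 < h) (j : ℕ) (hj : j ≤ 1) (x₀ : ℝ) :
    HasDerivAt (AiD h j) (AiD h (j+1) x₀) x₀ := by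
  have key := hasDerivAt_integral_of_dominated_loc_of_deriv_le (μ := volume.restrict (Ioi 0))
    (F := fun x t => fAj h j x t) (F' := fun x t => fAj h (j+1) x t) (x₀ := x₀)
    (bound := fun t => (1+h^2+t^2) * (Real.exp (h^3/3 + (|x₀|+1)*h) * Real.exp (-(h*t^2))))
    (Metric.ball_mem_nhds x₀ one_pos)
    (by filter_upwards with x; exact (fAj_cont h j x).aestronglyMeasurable.restrict)
    (fAj_integrableOn h hh j (hj.trans one_le_two) x₀)
    ((fAj_cont h (j+1) x₀).aestronglyMeasurable.restrict)
    ?_ (bound_integrable h hh _) ?_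
  · exact key.2
  · filter_upwards with t
    intro x hx
    refine (fAj_norm_le h (j+1) (by omega) x t).trans ?_
    have hxx : |x - x₀| < 1 := by
      simpa [Real.dist_eq] using Metric.mem_ball.mp hx
    have hxb : -x ≤ |x₀| + 1 := by
      have h5 := abs_sub_abs_le_abs_sub x x₀
      have h6 := neg_abs_le x
      linarith [hxx.le]
    gcongr
    nlinarith [hh.le]
  · filter_upwards with t
    intro x hx
    exact hasDerivAt_fAj h j x t

lemma AiD_re_bound (h : ℝ) (hh : 0 < h) (j : ℕ) (hj : j ≤ 2) (x : ℝ) :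
    |(AiD h j x).re| ≤ Real.exp (h^3/3 - x*h)
      * ∫ t in Ioi (0:ℝ), (1+h^2+t^2) * Real.exp (-(h*t^2)) := by
  refine (Complex.abs_re_le_norm _).trans ?_
  rw [AiD]
  refine (norm_integral_le_of_norm_le (bound_integrable h hh (Real.exp (h^3/3 - x*h)))
    (by filter_upwards with t; exact fAj_norm_le h j hj x t)).trans ?_
  have hrw : ∀ t : ℝ, (1+h^2+t^2) * (Real.exp (h^3/3 - x*h) * Real.exp (-(h*t^2)))
      = Real.exp (h^3/3 - x*h) * ((1+h^2+t^2) * Real.exp (-(h*t^2))) := fun t => by ring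
  simp_rw [hrw]
  rw [integral_const_mul]

lemma hasDerivAt_reAiD (h : ℝ) (hh : 0 < h) (j : ℕ) (hj : j ≤ 1) (x : ℝ) :
    HasDerivAt (fun s => Real.pi⁻¹ * (AiD h j s).re) (Real.pi⁻¹ * (AiD h (j+1) x).re) x := by
  have h1 := hasDerivAt_AiD h hh j hj x
  have h2 : HasDerivAt (fun s => (AiD h j s).re) ((AiD h (j+1) x).re) x := by
    exact Complex.reCLM.hasFDerivAt.comp_hasDerivAt x h1
  exact h2.const_mul _

lemma deriv_iter_Ai (h : ℝ) (hh : 0 < h) (j : ℕ) (hj : j ≤ 2) :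
    deriv^[j] Ai = fun s => Real.pi⁻¹ * (AiD h j s).re := by
  have h0 : Ai = fun s => Real.pi⁻¹ * (AiD h 0 s).re := funext fun s => Ai_eq h hh s
  have h1 : deriv Ai = fun s => Real.pi⁻¹ * (AiD h 1 s).re := by
    funext s
    rw [h0]
    exact (hasDerivAt_reAiD h hh 0 (by norm_num) s).deriv
  have h2 : deriv (deriv Ai) = fun s => Real.pi⁻¹ * (AiD h 2 s).re := by
    funext s
    rw [h1]
    exact (hasDerivAt_reAiD h hh 1 le_rfl s).deriv
  interval_cases j
  · simpa using h0
  · simpa using h1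
  · rw [Function.iterate_succ_apply', Function.iterate_one, h2]

/-- Exponential decay of the Airy function and its first two derivatives, with any
polynomial weight: for `i ∈ {0,1,2}`, `|s|^k |Ai^{(i)}(s)| ≤ C e^{-s}` for `s ≥ s_L`. -/
theorem airy_decay (sL : ℝ) (k : ℕ) :
    ∀ i ∈ ({0, 1, 2} : Set ℕ), ∃ C : ℝ, ∀ s : ℝ, sL ≤ s →
      |s| ^ k * |deriv^[i] Ai s| ≤ C * Real.exp (-s) := by
  intro i hi
  have hi' : i ≤ 2 := by
    simp only [Set.mem_insert_iff, Set.mem_singleton_iff] at hi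
    rcases hi with rfl | rfl | rfl <;> norm_num
  set h : ℝ := (k:ℝ) + 1 with hdef
  have hh : 0 < h := by positivity
  set B : ℝ := ∫ t in Ioi (0:ℝ), (1+h^2+t^2) * Real.exp (-(h*t^2)) with hB
  have hB0 : 0 ≤ B := integral_nonneg (fun t => by positivity)
  have hπ : (0:ℝ) ≤ Real.pi⁻¹ := inv_nonneg.2 Real.pi_pos.le
  set K : ℝ := Real.pi⁻¹ * Real.exp (h^3/3) * B with hK
  have hK0 : 0 ≤ K := by positivity
  set C₂ : ℝ := max 1 (|sL|^k * Real.exp ((h-1) * |sL|)) with hC2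
  refine ⟨K * C₂, fun s hs => ?_⟩
  have hbd : |deriv^[i] Ai s| ≤ K * Real.exp (-(h*s)) := by
    rw [deriv_iter_Ai h hh i hi']
    rw [abs_mul, abs_of_nonneg hπ]
    calc Real.pi⁻¹ * |(AiD h i s).re| ≤ Real.pi⁻¹ * (Real.exp (h^3/3 - s*h) * B) :=
          mul_le_mul_of_nonneg_left (AiD_re_bound h hh i hi' s) hπ
      _ = K * Real.exp (-(h*s)) := by
          rw [hK, show h^3/3 - s*h = h^3/3 + (-(h*s)) by ring, Real.exp_add]; ring
  have hmain : |s|^k * Real.exp (-(h*s)) ≤ C₂ * Real.exp (-s) := by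
    rcases le_or_gt 0 s with hs0 | hs0
    · have h1 : |s| = s := abs_of_nonneg hs0
      have h2 : Real.exp (-(h*s)) = Real.exp (-s)^k * Real.exp (-s) := by
        rw [show -(h*s) = (k:ℝ)*(-s) + (-s) by rw [hdef]; ring, Real.exp_add,
          Real.exp_nat_mul]
      have h3 : s * Real.exp (-s) ≤ 1 := by
        have h5 := Real.add_one_le_exp s
        calc s * Real.exp (-s) ≤ Real.exp s * Real.exp (-s) :=
              mul_le_mul_of_nonneg_right (by linarith) (Real.exp_pos _).le
          _ = 1 := by rw [← Real.exp_add]; simp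
      have h4 : s^k * Real.exp (-s)^k ≤ 1 := by
        rw [← mul_pow]
        exact pow_le_one₀ (by positivity) h3
      rw [h1, h2]
      calc s^k * (Real.exp (-s)^k * Real.exp (-s))
          = (s^k * Real.exp (-s)^k) * Real.exp (-s) := by ring
        _ ≤ 1 * Real.exp (-s) := mul_le_mul_of_nonneg_right h4 (Real.exp_pos _).le
        _ ≤ C₂ * Real.exp (-s) :=
            mul_le_mul_of_nonneg_right (le_max_left _ _) (Real.exp_pos _).le
    · have h1 : |s| ≤ |sL| := by
        rw [abs_of_neg hs0]
        have h6 : -s ≤ -sL := by linarith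
        exact h6.trans (neg_le_abs sL)
      have h2 : |s|^k ≤ |sL|^k := pow_le_pow_left₀ (abs_nonneg s) h1 k
      have hh1 : 0 ≤ h - 1 := by
        rw [hdef]; push_cast; linarith [Nat.cast_nonneg (α := ℝ) k]
      have h4 : -s ≤ |sL| := by rw [abs_of_neg hs0] at h1; exact h1
      have h3 : Real.exp (-(h*s)) ≤ Real.exp ((h-1)*|sL|) * Real.exp (-s) := by
        rw [← Real.exp_add]
        apply Real.exp_le_exp.2
        nlinarith
      calc |s|^k * Real.exp (-(h*s))
          ≤ |sL|^k * (Real.exp ((h-1)*|sL|) * Real.exp (-s)) :=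
            mul_le_mul h2 h3 (Real.exp_pos _).le (pow_nonneg (abs_nonneg _) _)
        _ = (|sL|^k * Real.exp ((h-1)*|sL|)) * Real.exp (-s) := by ring
        _ ≤ C₂ * Real.exp (-s) :=
            mul_le_mul_of_nonneg_right (le_max_right _ _) (Real.exp_pos _).le
  calc |s|^k * |deriv^[i] Ai s| ≤ |s|^k * (K * Real.exp (-(h*s))) :=
        mul_le_mul_of_nonneg_left hbd (by positivity)
    _ = K * (|s|^k * Real.exp (-(h*s))) := by ring
    _ ≤ K * (C₂ * Real.exp (-s)) := mul_le_mul_of_nonneg_left hmain hK0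
    _ = K * C₂ * Real.exp (-s) := by ring
end

section
/- For every N ≥ 1 and all real x, y: Σ_{n=0}^{N} φ_n(x) φ_n(y) + √((N+1)/2) · φ_N(x) · (ε φ_{N+1})(y) = Σ_{k=0}^{N−1} φ_k(x) φ_k(y) + (√(2N)/2) · φ_N(x) · (ε φ_{N−1})(y), where (ε g)(y) = ½ ∫_ℝ sgn(y − u) g(u) du. Equivalently, the GOE kernel S_{N+1,1}(x,y) = Σ_{n=0}^{N} φ_n(x) φ_n(y) + √((N+1)/2) φ_N(x) (ε φ_{N+1})(y) equals the GUE kernel S_{N,2}(x,y) = Σ_{k=0}^{N−1} φ_k(x) φ_k(y) plus the rank-one term ½ (2N)^{1/4} φ_N(x) · (2N)^{1/4} (ε φ_{N−1})(y). -/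
open Real Filter MeasureTheory

/-- `(ε g)(y) = ½ ∫_ℝ sgn(y - u) g(u) du`. -/
noncomputable def epsOp (g : ℝ → ℝ) (y : ℝ) : ℝ :=
  (1 / 2) * ∫ u : ℝ, Real.sign (y - u) * g u

section Aux

open Polynomial Set

/-- Derivative identity for probabilists' Hermite polynomials. -/
lemma hermite_deriv (n : ℕ) :
    derivative (hermite (n + 1)) = C ((n : ℤ) + 1) * hermite n := by
  induction n with
  | zero => simp [hermite_one, hermite_zero]
  | succ m ih =>
    rw [hermite_succ (m + 1), derivative_sub, derivative_mul, derivative_X, one_mul, ih,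
      derivative_mul, derivative_C, zero_mul, zero_add]
    have h := hermite_succ m
    have hC : (C ((m : ℤ) + 1) : ℤ[X]) = C (m : ℤ) + 1 := by simp
    have hC2 : (C ((m : ℤ) + 1 + 1) : ℤ[X]) = C (m : ℤ) + 2 := by
      simp [map_add]; ring
    push_cast
    linear_combination (-(C ((m : ℤ) + 1))) * h + hermite (m + 1) * hC - hermite (m + 1) * hC2

/-- The physicists' Hermite polynomial in terms of the probabilists' one. -/
lemma physHermite_eq (n : ℕ) (x : ℝ) :
    physHermite n x = Real.sqrt 2 ^ n * aeval (Real.sqrt 2 * x) (hermite n) := by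
  have hg : ContDiff ℝ n fun y : ℝ => Real.exp (-(y ^ 2 / 2)) := by
    apply ContDiff.exp
    exact ((contDiff_id.pow 2).div_const 2).neg
  have hfun : (fun t : ℝ => Real.exp (-t ^ 2)) =
      fun t : ℝ => (fun y : ℝ => Real.exp (-(y ^ 2 / 2))) (Real.sqrt 2 * t) := by
    funext t
    show Real.exp (-t ^ 2) = Real.exp (-((Real.sqrt 2 * t) ^ 2 / 2))
    rw [mul_pow, Real.sq_sqrt (by norm_num : (0:ℝ) ≤ 2)]
    ring_nf
  rw [physHermite, hfun, iteratedDeriv_comp_const_mul hg]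
  simp only [iteratedDeriv_eq_iterate]
  rw [Polynomial.deriv_gaussian_eq_hermite_mul_gaussian]
  have h1 : (Real.sqrt 2 * x) ^ 2 / 2 = x ^ 2 := by
    rw [mul_pow, Real.sq_sqrt (by norm_num : (0:ℝ) ≤ 2)]; ring
  rw [h1]
  have h2 : Real.exp (x ^ 2) * Real.exp (-x ^ 2) = 1 := by
    rw [← Real.exp_add]; simp
  have h3 : (-1 : ℝ) ^ n * (-1 : ℝ) ^ n = 1 := by
    rw [← mul_pow]; norm_num
  calc (-1:ℝ) ^ n * Real.exp (x ^ 2) *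
        (Real.sqrt 2 ^ n * ((-1) ^ n * aeval (Real.sqrt 2 * x) (hermite n) * Real.exp (-x ^ 2)))
      = ((-1:ℝ) ^ n * (-1) ^ n) * (Real.exp (x ^ 2) * Real.exp (-x ^ 2)) *
        (Real.sqrt 2 ^ n * aeval (Real.sqrt 2 * x) (hermite n)) := by ring
    _ = _ := by rw [h2, h3]; ring

/-- The combined normalizing constant of `osc n`. -/
noncomputable def oc (n : ℕ) : ℝ := hNorm n ^ (-(1 : ℝ) / 2) * Real.sqrt 2 ^ n

lemma hNorm_pos (n : ℕ) : 0 < hNorm n := by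
  unfold hNorm
  have := Real.pi_pos
  positivity

lemma osc_eq (n : ℕ) (x : ℝ) :
    osc n x = oc n * (Real.exp (-x ^ 2 / 2) * aeval (Real.sqrt 2 * x) (hermite n)) := by
  rw [osc, physHermite_eq, oc]; ring

lemma oc_rel (n : ℕ) : oc n = Real.sqrt (n + 1) * oc (n + 1) := by
  have h1 : hNorm (n + 1) = hNorm n * (2 * (n + 1)) := by
    simp only [hNorm, Nat.factorial_succ, pow_succ]
    push_cast; ring
  have hp : (0:ℝ) < 2 * (n + 1) := by positivity
  have key : ((2 * (n + 1) : ℝ)) ^ (-(1:ℝ)/2) = (Real.sqrt 2 * Real.sqrt (n + 1))⁻¹ := by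
    rw [show (-(1:ℝ)/2) = -(1/2) by norm_num, Real.rpow_neg hp.le,
      ← Real.sqrt_eq_rpow, Real.sqrt_mul (by norm_num : (0:ℝ) ≤ 2)]
  unfold oc
  rw [h1, Real.mul_rpow (hNorm_pos n).le hp.le, key, pow_succ]
  have hs2 : (0:ℝ) < Real.sqrt 2 := Real.sqrt_pos.mpr (by norm_num)
  have hsn : (0:ℝ) < Real.sqrt (n + 1) := Real.sqrt_pos.mpr (by positivity)
  field_simp

lemma poly_gauss_integrable (p : ℝ[X]) :
    Integrable (fun x : ℝ => p.eval x * Real.exp (-x ^ 2 / 2)) := by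
  have hrw : (fun x : ℝ => p.eval x * Real.exp (-x ^ 2 / 2)) =
      fun x => ∑ i ∈ Finset.range (p.natDegree + 1),
        p.coeff i * x ^ i * Real.exp (-x ^ 2 / 2) := by
    funext x
    rw [Polynomial.eval_eq_sum_range, Finset.sum_mul]
  rw [hrw]
  apply integrable_finset_sum
  intro i _
  have h := (integrable_rpow_mul_exp_neg_mul_sq (by norm_num : (0:ℝ) < 1/2)
    (s := (i : ℝ)) (by exact lt_of_lt_of_le neg_one_lt_zero (Nat.cast_nonneg i))).const_mul
    (p.coeff i)
  have heq : (fun x : ℝ => p.coeff i * (x ^ (i : ℝ) * Real.exp (-(1/2) * x ^ 2))) =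
      fun x => p.coeff i * x ^ i * Real.exp (-x ^ 2 / 2) := by
    funext x
    rw [Real.rpow_natCast, show -(1/2:ℝ) * x ^ 2 = -x ^ 2 / 2 by ring]
    ring
  rwa [heq] at h

lemma poly_gauss_tendsto (p : ℝ[X]) :
    Tendsto (fun x : ℝ => p.eval x * Real.exp (-x ^ 2 / 2)) (cocompact ℝ) (nhds 0) := by
  have hrw : (fun x : ℝ => p.eval x * Real.exp (-x ^ 2 / 2)) =
      fun x => ∑ i ∈ Finset.range (p.natDegree + 1),
        p.coeff i * x ^ i * Real.exp (-x ^ 2 / 2) := by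
    funext x
    rw [Polynomial.eval_eq_sum_range, Finset.sum_mul]
  rw [hrw, show (0:ℝ) = ∑ i ∈ Finset.range (p.natDegree + 1), (0:ℝ) by simp]
  apply tendsto_finset_sum
  intro i _
  have key := (tendsto_rpow_abs_mul_exp_neg_mul_sq_cocompact (by norm_num : (0:ℝ) < 1/2)
    (i : ℝ)).const_mul |p.coeff i|
  rw [mul_zero] at key
  apply squeeze_zero_norm _ key
  intro x
  rw [Real.norm_eq_abs, abs_mul, abs_mul, abs_pow, Real.abs_exp,
    show -x ^ 2 / 2 = -(1/2) * x ^ 2 by ring, ← Real.rpow_natCast |x| i]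
  exact le_of_eq (by ring)

lemma osc_polyform (n : ℕ) : ∃ p : ℝ[X], ∀ x, osc n x = p.eval x * Real.exp (-x ^ 2 / 2) := by
  refine ⟨C (oc n) * ((hermite n).map (algebraMap ℤ ℝ)).comp (C (Real.sqrt 2) * X), fun x => ?_⟩
  rw [osc_eq, eval_mul, eval_C, eval_comp, eval_mul, eval_C, eval_X, eval_map,
    ← aeval_def]
  ring

lemma osc_integrable (n : ℕ) : Integrable (osc n) := by
  obtain ⟨p, hp⟩ := osc_polyform n
  exact (poly_gauss_integrable p).congr (Eventually.of_forall fun x => (hp x).symm)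

lemma osc_tendsto_atTop (n : ℕ) : Tendsto (osc n) atTop (nhds 0) := by
  obtain ⟨p, hp⟩ := osc_polyform n
  exact (((poly_gauss_tendsto p).mono_left _root_.atTop_le_cocompact).congr fun x => (hp x).symm)

lemma osc_tendsto_atBot (n : ℕ) : Tendsto (osc n) atBot (nhds 0) := by
  obtain ⟨p, hp⟩ := osc_polyform n
  exact (((poly_gauss_tendsto p).mono_left _root_.atBot_le_cocompact).congr fun x => (hp x).symm)

/-- The differential recurrence `φ_{m+1}' = √((m+1)/2) φ_m - √((m+2)/2) φ_{m+2}`. -/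
lemma osc_hasDerivAt (m : ℕ) (u : ℝ) :
    HasDerivAt (osc (m + 1))
      (Real.sqrt ((m + 1) / 2) * osc m u - Real.sqrt (((m:ℝ) + 1 + 1) / 2) * osc (m + 1 + 1) u)
      u := by
  have hoscfun : osc (m + 1) =
      fun x => oc (m + 1) * (Real.exp (-x ^ 2 / 2) * aeval (Real.sqrt 2 * x) (hermite (m + 1))) :=
    funext (osc_eq (m + 1))
  have hE : HasDerivAt (fun x : ℝ => Real.exp (-x ^ 2 / 2)) (-u * Real.exp (-u ^ 2 / 2)) u := by
    have h := (((hasDerivAt_pow 2 u).neg).div_const 2).exp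
    convert h using 1
    simp
    simp only [Pi.neg_apply]
    ring
  have hlin : HasDerivAt (fun x : ℝ => Real.sqrt 2 * x) (Real.sqrt 2) u := by
    simpa using (hasDerivAt_id u).const_mul (Real.sqrt 2)
  have hA : HasDerivAt (fun x : ℝ => (aeval (Real.sqrt 2 * x) (hermite (m + 1)) : ℝ))
      (Real.sqrt 2 * (((m:ℝ) + 1) * aeval (Real.sqrt 2 * u) (hermite m))) u := by
    have h2 := (Polynomial.hasDerivAt_aeval (q := hermite (m + 1)) (𝕜 := ℝ) (Real.sqrt 2 * u))
    have h3 := h2.comp u hlin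
    refine h3.congr_deriv (Eq.symm ?_)
    rw [hermite_deriv m]
    simp [mul_comm]
  have hprod := (hE.mul hA).const_mul (oc (m + 1))
  rw [hoscfun]
  refine hprod.congr_deriv (Eq.symm ?_)
  set s := Real.sqrt 2 with hs_def
  set a := Real.sqrt ((m:ℝ) + 1) with ha_def
  set b := Real.sqrt ((m:ℝ) + 1 + 1) with hb_def
  have hs : s * s = 2 := Real.mul_self_sqrt (by norm_num)
  have ha : a * a = (m:ℝ) + 1 := Real.mul_self_sqrt (by positivity)
  have hsne : s ≠ 0 := by
    rw [hs_def]; exact ne_of_gt (Real.sqrt_pos.mpr (by norm_num))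
  have ht1 : Real.sqrt (((m:ℝ) + 1) / 2) = a * s / 2 := by
    have h : Real.sqrt (((m:ℝ) + 1) / 2) * s = a := by
      rw [hs_def, ha_def, ← Real.sqrt_mul (by positivity)]
      congr 1; ring
    rw [← h, mul_assoc, hs]; ring
  have ht2 : Real.sqrt (((m:ℝ) + 1 + 1) / 2) = b * s / 2 := by
    have h : Real.sqrt (((m:ℝ) + 1 + 1) / 2) * s = b := by
      rw [hs_def, hb_def, ← Real.sqrt_mul (by positivity)]
      congr 1; ring
    rw [← h, mul_assoc, hs]; ring
  have hoc0 : oc m = a * oc (m + 1) := oc_rel m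
  have hoc1 : oc (m + 1) = b * oc (m + 1 + 1) := by
    have h := oc_rel (m + 1)
    push_cast at h
    exact h
  rw [osc_eq m u, osc_eq (m + 1 + 1) u, ht1, ht2, hoc0, hoc1]
  have hb2 : b * b = (m:ℝ) + 1 + 1 := Real.mul_self_sqrt (by positivity)
  have hA2 : (aeval (Real.sqrt 2 * u) (hermite (m + 1 + 1)) : ℝ) =
      Real.sqrt 2 * u * aeval (Real.sqrt 2 * u) (hermite (m + 1)) -
        ((m:ℝ) + 1) * aeval (Real.sqrt 2 * u) (hermite m) := by
    rw [hermite_succ (m + 1), map_sub, map_mul, aeval_X, hermite_deriv m]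
    simp [mul_comm]
  rw [hA2]
  set E := Real.exp (-u ^ 2 / 2)
  set A0 := (aeval (Real.sqrt 2 * u) (hermite m) : ℝ)
  set A1 := (aeval (Real.sqrt 2 * u) (hermite (m + 1)) : ℝ)
  linear_combination (s * b * oc (m + 1 + 1) * E * A0 / 2) * ha -
    (b * oc (m + 1 + 1) * u * E * A1 / 2) * hs

lemma measurable_realSign : Measurable Real.sign := by
  have h : Real.sign = fun r : ℝ => if r < 0 then (-1 : ℝ) else if 0 < r then 1 else 0 := by
    funext r; rfl
  rw [h]
  exact Measurable.ite (measurableSet_lt measurable_id measurable_const) measurable_const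
    (Measurable.ite (measurableSet_lt measurable_const measurable_id) measurable_const
      measurable_const)

lemma abs_realSign_le (r : ℝ) : ‖Real.sign r‖ ≤ 1 := by
  rcases lt_trichotomy r 0 with h | h | h
  · rw [Real.sign_of_neg h]; simp
  · rw [h, Real.sign_zero]; simp
  · rw [Real.sign_of_pos h]; simp

lemma sign_mul_integrable {g : ℝ → ℝ} (hg : Integrable g) (y : ℝ) :
    Integrable (fun u => Real.sign (y - u) * g u) := by
  apply Integrable.bdd_mul (c := 1) hg
  · exact (measurable_realSign.comp (measurable_const.sub measurable_id)).aestronglyMeasurable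
  · exact Eventually.of_forall fun u => abs_realSign_le _

/-- `ε` inverts differentiation for integrable derivatives of functions vanishing at `±∞`. -/
lemma epsOp_deriv (f f' : ℝ → ℝ) (hd : ∀ u, HasDerivAt f (f' u) u)
    (hi : Integrable f') (ht : Tendsto f atTop (nhds 0)) (hb : Tendsto f atBot (nhds 0))
    (y : ℝ) : epsOp f' y = f y := by
  have hint : Integrable (fun u => Real.sign (y - u) * f' u) := sign_mul_integrable hi y
  have hIio : ∫ u in Iio y, f' u = f y := by
    rw [setIntegral_congr_set Iio_ae_eq_Iic]
    rw [integral_Iic_of_hasDerivAt_of_tendsto (hd y).continuousAt.continuousWithinAt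
      (fun u _ => hd u) hi.integrableOn hb]
    simp
  have hIci : ∫ u in Ici y, f' u = -f y := by
    rw [setIntegral_congr_set Ioi_ae_eq_Ici.symm]
    rw [integral_Ioi_of_hasDerivAt_of_tendsto (hd y).continuousAt.continuousWithinAt
      (fun u _ => hd u) hi.integrableOn ht]
    simp
  have hy : ∀ᵐ u : ℝ, u ≠ y := by
    rw [ae_iff]
    convert volume_singleton (a := y) using 2
    ext u
    simp [eq_comm]
  have h1 : ∫ u in Iio y, Real.sign (y - u) * f' u = ∫ u in Iio y, f' u := by
    apply setIntegral_congr_ae measurableSet_Iio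
    filter_upwards with u hu
    rw [Real.sign_of_pos (by simpa using hu : (0:ℝ) < y - u), one_mul]
  have h2 : ∫ u in Ici y, Real.sign (y - u) * f' u = ∫ u in Ici y, -f' u := by
    apply setIntegral_congr_ae measurableSet_Ici
    filter_upwards [hy] with u hne hu
    have : y - u < 0 := by
      rcases lt_or_eq_of_le (α := ℝ) hu with h | h
      · linarith
      · exact absurd h.symm hne
    rw [Real.sign_of_neg this]; ring
  rw [epsOp, ← intervalIntegral.integral_Iio_add_Ici (f := fun u => Real.sign (y - u) * f' u)
    hint.integrableOn hint.integrableOn, h1, h2, integral_neg, hIio, hIci]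
  ring

end Aux

/-- The GOE kernel equals the GUE kernel plus a rank-one term:
`S_{N+1,1}(x,y) = S_{N,2}(x,y) + (√(2N)/2) φ_N(x) (ε φ_{N-1})(y)`. -/
theorem goe_kernel_eq_gue_kernel_plus_rank_one (N : ℕ) (hN : 1 ≤ N) (x y : ℝ) :
    (∑ n ∈ Finset.range (N + 1), osc n x * osc n y) +
      Real.sqrt ((N + 1) / 2) * osc N x * epsOp (osc (N + 1)) y =
    (∑ k ∈ Finset.range N, osc k x * osc k y) +
      Real.sqrt (2 * N) / 2 * osc N x * epsOp (osc (N - 1)) y := by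
  obtain ⟨m, rfl⟩ : ∃ m, N = m + 1 := ⟨N - 1, (Nat.succ_pred_eq_of_pos hN).symm⟩
  set t1 := Real.sqrt (((m:ℝ) + 1) / 2) with ht1_def
  set t2 := Real.sqrt (((m:ℝ) + 1 + 1) / 2) with ht2_def
  have hkey : epsOp (fun u => t1 * osc m u - t2 * osc (m + 1 + 1) u) y = osc (m + 1) y := by
    apply epsOp_deriv _ _ (osc_hasDerivAt m)
    · exact ((osc_integrable m).const_mul t1).sub ((osc_integrable (m + 1 + 1)).const_mul t2)
    · exact osc_tendsto_atTop (m + 1)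
    · exact osc_tendsto_atBot (m + 1)
  have hlin : epsOp (fun u => t1 * osc m u - t2 * osc (m + 1 + 1) u) y
      = t1 * epsOp (osc m) y - t2 * epsOp (osc (m + 1 + 1)) y := by
    unfold epsOp
    rw [show (fun u => Real.sign (y - u) * (t1 * osc m u - t2 * osc (m + 1 + 1) u))
        = fun u => t1 * (Real.sign (y - u) * osc m u)
            - t2 * (Real.sign (y - u) * osc (m + 1 + 1) u) by funext u; ring]
    rw [integral_sub ((sign_mul_integrable (osc_integrable m) y).const_mul t1)
        ((sign_mul_integrable (osc_integrable (m + 1 + 1)) y).const_mul t2),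
      integral_const_mul, integral_const_mul]
    ring
  have heq : t1 * epsOp (osc m) y - t2 * epsOp (osc (m + 1 + 1)) y = osc (m + 1) y :=
    hlin.symm.trans hkey
  have hhalf : Real.sqrt (2 * ((m:ℝ) + 1)) / 2 = t1 := by
    have h4 : Real.sqrt 4 = 2 := by
      rw [show (4:ℝ) = 2 ^ 2 by norm_num, Real.sqrt_sq (by norm_num : (0:ℝ) ≤ 2)]
    rw [ht1_def, show ((m:ℝ) + 1) / 2 = 2 * ((m:ℝ) + 1) / 4 by ring,
      Real.sqrt_div (by positivity : (0:ℝ) ≤ 2 * ((m:ℝ) + 1)), h4]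
  rw [Finset.sum_range_succ]
  simp only [Nat.add_sub_cancel]
  push_cast
  rw [hhalf]
  linear_combination (-(osc (m + 1) x)) * heq
end
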